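/- Let K be a field and let L be a finite-dimensional Lie algebra over K whose center is contained in its derived subalgebra, i.e. Z(L) ⊆ [L,L]. Suppose f, g, h : L → L are Lie algebra endomorphisms with f = g + h (pointwise sum) and h is central, i.e. h(L) ⊆ Z(L). Then det f = det g (determinants of the underlying linear maps). In particular, f is a Lie algebra automorphism if and only if g is. -/

import Mathlib

open Module

/-- If `f` and `g` both preserve a submodule `S`, agree on `S`, and `f - g` maps into `S`,
then they have the same determinant (block-triangular argument). -/
lemma det_eq_of_agree_on_compl {K L : Type*} [Field K] [AddCommGroup L] [Module K L]
    [FiniteDimensional K L] (S : Submodule K L) (f g : L →ₗ[K] L)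
    (hfS : ∀ x ∈ S, f x ∈ S) (hgS : ∀ x ∈ S, g x ∈ S)
    (heq : ∀ x ∈ S, f x = g x) (hquot : ∀ x : L, f x - g x ∈ S) :
    LinearMap.det f = LinearMap.det g := by
  obtain ⟨W, hW⟩ := Submodule.exists_isCompl S
  let e := S.prodEquivOfIsCompl W hW
  let b₁ := finBasis K S
  let b₂ := finBasis K W
  let b := b₁.prod b₂
  rw [← LinearMap.det_conj f e.symm, ← LinearMap.det_conj g e.symm,
    ← LinearMap.det_toMatrix b, ← LinearMap.det_toMatrix b
      (e.symm.toLinearMap ∘ₗ g ∘ₗ e.symm.symm.toLinearMap)]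
  set Mf := LinearMap.toMatrix b b (e.symm.toLinearMap ∘ₗ f ∘ₗ e.symm.symm.toLinearMap) with hMf
  set Mg := LinearMap.toMatrix b b (e.symm.toLinearMap ∘ₗ g ∘ₗ e.symm.symm.toLinearMap) with hMg
  have hbL : ∀ j, (e.symm.symm : S × W →ₗ[K] L) (b (Sum.inl j)) = (b₁ j : L) := by
    intro j
    simp only [LinearEquiv.coe_coe, LinearEquiv.symm_symm]
    have : (b (Sum.inl j)) = ((b₁ j : S), (0 : W)) :=
      Prod.ext (Basis.prod_apply_inl_fst b₁ b₂ j) (Basis.prod_apply_inl_snd b₁ b₂ j)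
    rw [this, Submodule.coe_prodEquivOfIsCompl']
    simp
  have hbR : ∀ j, (e.symm.symm : S × W →ₗ[K] L) (b (Sum.inr j)) = (b₂ j : L) := by
    intro j
    simp only [LinearEquiv.coe_coe, LinearEquiv.symm_symm]
    have : (b (Sum.inr j)) = ((0 : S), (b₂ j : W)) :=
      Prod.ext (Basis.prod_apply_inr_fst b₁ b₂ j) (Basis.prod_apply_inr_snd b₁ b₂ j)
    rw [this, Submodule.coe_prodEquivOfIsCompl']
    simp
  -- second component of e.symm applied to an element of S is zero
  have hsnd : ∀ x : L, x ∈ S → (e.symm x).2 = 0 := fun x hx =>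
    (Submodule.prodEquivOfIsCompl_symm_apply_snd_eq_zero S W hW).2 hx
  have h21f : Mf.toBlocks₂₁ = 0 := by
    ext i j
    simp only [Matrix.toBlocks₂₁, Matrix.zero_apply, Matrix.of_apply, hMf,
      LinearMap.toMatrix_apply, LinearMap.comp_apply, hbL, LinearEquiv.coe_coe]
    rw [Basis.prod_repr_inr, hsnd _ (hfS _ (b₁ j).2)]
    simp
  have h21g : Mg.toBlocks₂₁ = 0 := by
    ext i j
    simp only [Matrix.toBlocks₂₁, Matrix.zero_apply, Matrix.of_apply, hMg,
      LinearMap.toMatrix_apply, LinearMap.comp_apply, hbL, LinearEquiv.coe_coe]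
    rw [Basis.prod_repr_inr, hsnd _ (hgS _ (b₁ j).2)]
    simp
  have h11 : Mf.toBlocks₁₁ = Mg.toBlocks₁₁ := by
    ext i j
    simp only [Matrix.toBlocks₁₁, Matrix.of_apply, hMf, hMg,
      LinearMap.toMatrix_apply, LinearMap.comp_apply, hbL, LinearEquiv.coe_coe]
    rw [heq _ (b₁ j).2]
  have h22 : Mf.toBlocks₂₂ = Mg.toBlocks₂₂ := by
    ext i j
    simp only [Matrix.toBlocks₂₂, Matrix.of_apply, hMf, hMg,
      LinearMap.toMatrix_apply, LinearMap.comp_apply, hbR, LinearEquiv.coe_coe]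
    rw [Basis.prod_repr_inr, Basis.prod_repr_inr]
    have : (e.symm (f (b₂ j))).2 = (e.symm (g (b₂ j))).2 := by
      have : (e.symm (f (b₂ j) - g (b₂ j))).2 = 0 := hsnd _ (hquot _)
      rw [map_sub] at this
      exact sub_eq_zero.mp this
    rw [this]
  rw [← Matrix.fromBlocks_toBlocks Mf, ← Matrix.fromBlocks_toBlocks Mg, h21f, h21g, h11, h22, Matrix.det_fromBlocks_zero₂₁, Matrix.det_fromBlocks_zero₂₁]


lemma bij_iff_det_ne_zero {K L : Type*} [Field K] [AddCommGroup L] [Module K L]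
    [FiniteDimensional K L] (φ : L →ₗ[K] L) :
    Function.Bijective φ ↔ LinearMap.det φ ≠ 0 := by
  constructor
  · intro hbij
    exact (LinearMap.isUnit_det φ ((Module.End.isUnit_iff φ).2 hbij)).ne_zero
  · intro hdet
    let b := finBasis K L
    have h1 : IsUnit (LinearMap.toMatrix b b φ) := by
      rw [Matrix.isUnit_iff_isUnit_det, LinearMap.det_toMatrix]
      exact isUnit_iff_ne_zero.2 hdet
    have h2 : IsUnit φ := by
      have := h1.map (LinearMap.toMatrixAlgEquiv b).symm
      have heq : (LinearMap.toMatrixAlgEquiv b).symm (LinearMap.toMatrix b b φ) = φ := by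
        rw [show LinearMap.toMatrix b b φ = LinearMap.toMatrixAlgEquiv b φ from rfl]
        exact (LinearMap.toMatrixAlgEquiv b).symm_apply_apply φ
      rwa [heq] at this
    exact (Module.End.isUnit_iff φ).1 h2

/-- Let `L` be a finite-dimensional Lie algebra over a field `K` whose center
is contained in its derived subalgebra.  If `f = g + h` (pointwise) for Lie algebra
endomorphisms `f, g, h` of `L` with `h` central, then `det f = det g`; in particular `f` is
a Lie algebra automorphism if and only if `g` is. -/
theorem stmt0 {K L : Type*} [Field K] [LieRing L] [LieAlgebra K L]
    [FiniteDimensional K L]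
    (hZ : LieAlgebra.center K L ≤ ⁅(⊤ : LieIdeal K L), (⊤ : LieIdeal K L)⁆)
    (f g h : L →ₗ⁅K⁆ L)
    (hsum : ∀ x : L, f x = g x + h x)
    (hcentral : ∀ x : L, h x ∈ LieAlgebra.center K L) :
    LinearMap.det (f : L →ₗ[K] L) = LinearMap.det (g : L →ₗ[K] L) ∧
      (Function.Bijective f ↔ Function.Bijective g) := by
  set D : LieIdeal K L := ⁅(⊤ : LieIdeal K L), (⊤ : LieIdeal K L)⁆ with hD
  set S : Submodule K L := D.toSubmodule with hS
  -- `h` kills the derived subalgebra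
  have hSspan : S = Submodule.span K {m : L | ∃ x ∈ (⊤ : LieIdeal K L),
      ∃ n ∈ (⊤ : LieIdeal K L), ⁅x, n⁆ = m} := by
    rw [hS, hD, LieSubmodule.lieIdeal_oper_eq_linear_span']
  have hker : ∀ z ∈ S, h z = 0 := by
    intro z hz
    rw [hSspan] at hz
    induction hz using Submodule.span_induction with
    | mem m hm =>
      obtain ⟨x, -, y, -, rfl⟩ := hm
      rw [LieHom.map_lie]
      exact ((LieModule.mem_maxTrivSubmodule K L L (h y)).1 (hcentral y)) (h x)
    | zero => simp
    | add u v _ _ hu hv => rw [map_add, hu, hv, add_zero]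
    | smul a u _ hu => rw [map_smul, hu, smul_zero]
  -- h maps into S
  have hhS : ∀ x : L, h x ∈ S := fun x => hZ (hcentral x)
  -- f and g preserve S
  have hpres : ∀ (φ : L →ₗ⁅K⁆ L), ∀ x ∈ S, φ x ∈ S := by
    intro φ x hx
    rw [hSspan] at hx ⊢
    induction hx using Submodule.span_induction with
    | mem m hm =>
      obtain ⟨x, -, y, -, rfl⟩ := hm
      rw [LieHom.map_lie]
      exact Submodule.subset_span ⟨φ x, trivial, φ y, trivial, rfl⟩
    | zero => simp
    | add u v _ _ hu hv => rw [map_add]; exact add_mem hu hv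
    | smul a u _ hu => rw [map_smul]; exact Submodule.smul_mem _ a hu
  have heqS : ∀ x ∈ S, (f : L →ₗ[K] L) x = (g : L →ₗ[K] L) x := by
    intro x hx
    have : h x = 0 := hker x hx
    simp only [LieHom.coe_toLinearMap, hsum x, this, add_zero]
  have hquot : ∀ x : L, (f : L →ₗ[K] L) x - (g : L →ₗ[K] L) x ∈ S := by
    intro x
    simp only [LieHom.coe_toLinearMap, hsum x, add_sub_cancel_left]
    exact hhS x
  have hdet : LinearMap.det (f : L →ₗ[K] L) = LinearMap.det (g : L →ₗ[K] L) :=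
    det_eq_of_agree_on_compl S _ _ (hpres f) (hpres g) heqS hquot
  refine ⟨hdet, ?_⟩
  have hf : Function.Bijective f ↔ _ := bij_iff_det_ne_zero (f : L →ₗ[K] L)
  have hg : Function.Bijective g ↔ _ := bij_iff_det_ne_zero (g : L →ₗ[K] L)
  rw [hf, hg, hdet]
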